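/- Let E be a real normed space and K ⊆ E a nontrivial cone with norm-base B_K. Then the following six conditions are pairwise equivalent: (1) there exists (x*, α) ∈ K^{aw#} with α > 0; (2) there exists (x*, α) ∈ K^{a#} with α > 0; (3) there exists (x*, α) ∈ K^{a+} with α > 0; (4) cor K⁺ ≠ ∅; (5) the interior of K⁺ in E* (with the dual norm topology) is nonempty; (6) 0 ∉ cl S_K, where S_K = conv(B_K) and cl denotes norm closure. -/

import Mathlib

open Set

variable {E : Type*} [NormedAddCommGroup E] [NormedSpace ℝ E]

/-- `K` is a cone: contains `0` and is closed under nonnegative scalar multiplication. -/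
def IsCone (K : Set E) : Prop :=
  (0 : E) ∈ K ∧ ∀ t : ℝ, 0 ≤ t → ∀ x ∈ K, t • x ∈ K

/-- A cone is nontrivial if it is neither `{0}` nor the whole space. -/
def IsNontrivialCone (K : Set E) : Prop :=
  IsCone K ∧ K ≠ {0} ∧ K ≠ Set.univ

/-- The norm-base of a cone: its intersection with the unit sphere. -/
def normBase (K : Set E) : Set E := {x ∈ K | ‖x‖ = 1}

/-- Closure of a set with respect to the weak topology `σ(E, E*)`. -/
noncomputable def wClosure (S : Set E) : Set E :=
  (toWeakSpace ℝ E).symm '' closure ((toWeakSpace ℝ E) '' S)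

/-- A set is weakly compact if it is compact in the weak topology `σ(E, E*)`. -/
def WeaklyCompact (S : Set E) : Prop :=
  IsCompact ((toWeakSpace ℝ E) '' S)

/-- A set is weakly closed if it equals its weak closure. -/
noncomputable def WeaklyClosed (S : Set E) : Prop :=
  wClosure S = S

/-- The (topological) dual cone `K⁺`. -/
def dualCone (K : Set E) : Set (E →L[ℝ] ℝ) :=
  {f | ∀ k ∈ K, 0 ≤ f k}

/-- The set `K^#` of functionals strictly positive on `K \ {0}`. -/
def sharpCone (K : Set E) : Set (E →L[ℝ] ℝ) :=
  {f | ∀ k ∈ K, k ≠ 0 → 0 < f k}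

/-- The set `K^{w#}` of functionals strictly positive on the weak closure of the norm-base. -/
noncomputable def wSharpCone (K : Set E) : Set (E →L[ℝ] ℝ) :=
  {f | ∀ x ∈ wClosure (normBase K), 0 < f x}

/-- The algebraic interior (core) of a set in a real vector space. -/
def core {X : Type*} [AddCommGroup X] [Module ℝ X] (Ω : Set X) : Set X :=
  {x ∈ Ω | ∀ v : X, ∃ ε > 0, ∀ t ∈ Set.Icc (0 : ℝ) ε, x + t • v ∈ Ω}

/-- The augmented dual cone `K^{a+}`. -/
def augDualCone (K : Set E) : Set ((E →L[ℝ] ℝ) × ℝ) :=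
  {p | 0 ≤ p.2 ∧ ∀ y ∈ K, 0 ≤ p.1 y - p.2 * ‖y‖}

/-- The set `K^{a#}`. -/
def augSharpCone (K : Set E) : Set ((E →L[ℝ] ℝ) × ℝ) :=
  {p | 0 ≤ p.2 ∧ p.1 ∈ sharpCone K ∧ ∀ y ∈ K, y ≠ 0 → 0 < p.1 y - p.2 * ‖y‖}

/-- The set `K^{aw#}`. -/
noncomputable def augWSharpCone (K : Set E) : Set ((E →L[ℝ] ℝ) × ℝ) :=
  {p | 0 ≤ p.2 ∧ p.1 ∈ sharpCone K ∧ ∀ y ∈ wClosure (normBase K), p.2 < p.1 y}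

/-- `S_C = conv(B_C)`. -/
noncomputable def convBase (C : Set E) : Set E := convexHull ℝ (normBase C)

/-- `S_C^0 = conv({0} ∪ B_C)`. -/
noncomputable def convBase0 (C : Set E) : Set E := convexHull ℝ ({0} ∪ normBase C)

set_option synthInstance.maxHeartbeats 1000000 in
lemma aux_baire : BaireSpace (E →L[ℝ] ℝ) := inferInstance

lemma aux_self_subset_wClosure (S : Set E) : S ⊆ wClosure S := fun x hx => by
  refine ⟨toWeakSpace ℝ E x, subset_closure ⟨x, hx, rfl⟩, by simp⟩

lemma aux_wClosure_subset (S : Set E) : wClosure S ⊆ closure (convexHull ℝ S) := by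
  rintro x ⟨w, hw, rfl⟩
  have h1 : closure ((toWeakSpace ℝ E) '' S) ⊆
      closure ((toWeakSpace ℝ E) '' (convexHull ℝ S)) :=
    closure_mono (image_mono (subset_convexHull ℝ S))
  have h2 := (convex_convexHull ℝ S).toWeakSpace_closure (𝕜 := ℝ)
  have hw2 : w ∈ (toWeakSpace ℝ E) '' (closure (convexHull ℝ S)) := by
    rw [h2]; exact h1 hw
  obtain ⟨y, hy, rfl⟩ := hw2
  simpa using hy

lemma aux_halfspace {S : Set E} {f : E →L[ℝ] ℝ} {α : ℝ} (h : ∀ x ∈ S, α ≤ f x) :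
    ∀ x ∈ closure (convexHull ℝ S), α ≤ f x := by
  have hconv : Convex ℝ {x : E | α ≤ f x} := convex_halfSpace_ge ⟨f.toLinearMap.map_add, f.toLinearMap.map_smul⟩ α
  have hcl : IsClosed {x : E | α ≤ f x} := isClosed_le continuous_const f.continuous
  intro x hx
  exact closure_minimal (convexHull_min h hconv) hcl hx

lemma aux_memBase {K : Set E} (hK : IsCone K) {k : E} (hk : k ∈ K) (hk0 : k ≠ 0) :
    ‖k‖⁻¹ • k ∈ normBase K ∧ k = ‖k‖ • (‖k‖⁻¹ • k) := by
  have hn : ‖k‖ ≠ 0 := norm_ne_zero_iff.mpr hk0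
  refine ⟨⟨hK.2 _ (by positivity) _ hk, ?_⟩, ?_⟩
  · rw [norm_smul]; simp [abs_of_nonneg, inv_mul_cancel₀ hn]
  · rw [smul_inv_smul₀ hn]

lemma aux_isClosed_dualCone (K : Set E) : IsClosed (dualCone K) := by
  have : dualCone K = ⋂ k ∈ K, {f : E →L[ℝ] ℝ | 0 ≤ f k} := by
    ext f; simp [dualCone]
  rw [this]
  exact isClosed_biInter fun k _ =>
    isClosed_le continuous_const (ContinuousLinearMap.apply ℝ ℝ k).continuous

theorem stmt8 (K : Set E) (hK : IsNontrivialCone K) :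
    List.TFAE [
      (∃ p ∈ augWSharpCone K, 0 < p.2),
      (∃ p ∈ augSharpCone K, 0 < p.2),
      (∃ p ∈ augDualCone K, 0 < p.2),
      (core (dualCone K)).Nonempty,
      (interior (dualCone K)).Nonempty,
      (0 : E) ∉ closure (convBase K)] := by
  obtain ⟨hcone, hne, -⟩ := hK
  tfae_have 1 → 2 := by
    rintro ⟨⟨f, α⟩, ⟨hα, hsharp, hw⟩, hαpos⟩
    refine ⟨⟨f, α⟩, ⟨hα, hsharp, fun y hy hy0 => ?_⟩, hαpos⟩
    obtain ⟨hb, hy'⟩ := aux_memBase hcone hy hy0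
    have := hw _ (aux_self_subset_wClosure _ hb)
    have hfy : f y = ‖y‖ * f (‖y‖⁻¹ • y) := by
      conv_lhs => rw [hy']
      simp [mul_comm]
    have hn : 0 < ‖y‖ := norm_pos_iff.mpr hy0
    rw [hfy]
    nlinarith
  tfae_have 2 → 3 := by
    rintro ⟨⟨f, α⟩, ⟨hα, hsharp, hpos⟩, hαpos⟩
    refine ⟨⟨f, α⟩, ⟨hα, fun y hy => ?_⟩, hαpos⟩
    rcases eq_or_ne y 0 with rfl | hy0
    · simp
    · exact (hpos y hy hy0).le
  tfae_have 3 → 6 := by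
    rintro ⟨⟨f, α⟩, ⟨hα, hpos⟩, hαpos⟩ h0
    have hB : ∀ x ∈ normBase K, α ≤ f x := by
      rintro x ⟨hx, hx1⟩
      have := hpos x hx
      simp only [hx1, mul_one] at this
      linarith
    have := aux_halfspace hB _ h0
    simp only [map_zero] at this
    linarith
  tfae_have 6 → 5 := by
    intro h6
    obtain ⟨f, u, hu0, hu⟩ := geometric_hahn_banach_point_closed
      ((convex_convexHull ℝ _).closure) isClosed_closure h6
    simp only [map_zero] at hu0
    refine ⟨f, mem_interior.mpr ⟨Metric.ball f u, fun g hg k hk => ?_, Metric.isOpen_ball,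
      Metric.mem_ball_self hu0⟩⟩
    rcases eq_or_ne k 0 with rfl | hk0
    · simp
    · obtain ⟨hb, hk'⟩ := aux_memBase hcone hk hk0
      set b := ‖k‖⁻¹ • k with hbdef
      have hfb : u < f b := hu _ (subset_closure (subset_convexHull ℝ _ hb))
      have hdiff : |(f - g) b| ≤ ‖f - g‖ := by
        calc |(f - g) b| ≤ ‖f - g‖ * ‖b‖ := (f - g).le_opNorm b
        _ = ‖f - g‖ := by rw [hb.2, mul_one]
      have hdist : ‖f - g‖ < u := by
        rw [Metric.mem_ball, dist_eq_norm] at hg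
        rwa [norm_sub_rev]
      have hgb : 0 < g b := by
        have : (f - g) b = f b - g b := by simp
        have := abs_le.mp hdiff
        linarith [this.2, this.1]
      have : g k = ‖k‖ * g b := by
        conv_lhs => rw [hk']
        simp [mul_comm]
      rw [this]
      positivity
  tfae_have 6 → 1 := by
    intro h6
    obtain ⟨f, u, hu0, hu⟩ := geometric_hahn_banach_point_closed
      ((convex_convexHull ℝ _).closure) isClosed_closure h6
    simp only [map_zero] at hu0
    have hsharp : f ∈ sharpCone K := by
      intro k hk hk0
      obtain ⟨hb, hk'⟩ := aux_memBase hcone hk hk0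
      have hfb : u < f (‖k‖⁻¹ • k) := hu _ (subset_closure (subset_convexHull ℝ _ hb))
      have : f k = ‖k‖ * f (‖k‖⁻¹ • k) := by
        nth_rewrite 1 [hk']
        simp only [map_smul, smul_eq_mul]
      rw [this]
      have : 0 < ‖k‖ := norm_pos_iff.mpr hk0
      nlinarith
    refine ⟨⟨f, u / 2⟩, ⟨by linarith, hsharp, fun y hy => ?_⟩, by simpa using half_pos hu0⟩
    have : u < f y := hu _ (aux_wClosure_subset _ hy)
    simp only
    linarith
  tfae_have 5 → 4 := by
    rintro ⟨f, hf⟩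
    obtain ⟨ε, hε, hball⟩ := Metric.mem_nhds_iff.mp (mem_interior_iff_mem_nhds.mp hf)
    refine ⟨f, hball (Metric.mem_ball_self hε), fun v => ?_⟩
    refine ⟨ε / (2 * (‖v‖ + 1)), by positivity, fun t ht => ?_⟩
    apply hball
    rw [Metric.mem_ball, dist_eq_norm]
    have h1 : ‖f + t • v - f‖ = t * ‖v‖ := by
      rw [add_sub_cancel_left, norm_smul t v, Real.norm_eq_abs, abs_of_nonneg ht.1]
    rw [h1]
    have hv1 : 0 < ‖v‖ + 1 := by positivity
    calc t * ‖v‖ ≤ (ε / (2 * (‖v‖ + 1))) * ‖v‖ :=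
          mul_le_mul_of_nonneg_right ht.2 (norm_nonneg v)
    _ < ε := by
        rw [div_mul_eq_mul_div, div_lt_iff₀ (by positivity)]
        nlinarith [norm_nonneg v]
  tfae_have 4 → 5 := by
    rintro ⟨f₀, hf₀C, hcore⟩
    haveI : BaireSpace (E →L[ℝ] ℝ) := aux_baire
    set C := dualCone K
    set s : ℕ → Set (E →L[ℝ] ℝ) := fun n => {g | f₀ + ((n : ℝ) + 1)⁻¹ • g ∈ C} with hs
    have hclosed : ∀ n, IsClosed (s n) := by
      intro n
      have : s n = (fun g : E →L[ℝ] ℝ => f₀ + ((n : ℝ) + 1)⁻¹ • g) ⁻¹' C := rfl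
      rw [this]
      exact (aux_isClosed_dualCone K).preimage (continuous_const.add (continuous_const_smul _))
    have huniv : ⋃ n, s n = univ := by
      refine eq_univ_of_forall fun v => mem_iUnion.mpr ?_
      obtain ⟨ε, hε, hεv⟩ := hcore v
      obtain ⟨n, hn⟩ := exists_nat_ge (1 / ε)
      refine ⟨n, hεv _ ⟨by positivity, ?_⟩⟩
      rw [inv_le_comm₀ (by positivity) hε] -- (n+1)⁻¹ ≤ ε ↔ ε⁻¹ ≤ n+1
      calc ε⁻¹ = 1 / ε := (one_div ε).symm
      _ ≤ (n : ℝ) := hn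
      _ ≤ (n : ℝ) + 1 := by linarith
    obtain ⟨n, x, hx⟩ := nonempty_interior_of_iUnion_of_closed hclosed huniv
    have hc : ((n : ℝ) + 1)⁻¹ ≠ 0 := by positivity
    let φ : (E →L[ℝ] ℝ) ≃ₜ (E →L[ℝ] ℝ) :=
      (Homeomorph.smulOfNeZero (((n : ℝ) + 1)⁻¹) hc).trans (Homeomorph.addLeft f₀)
    have hsn : s n = φ ⁻¹' C := rfl
    rw [hsn, ← φ.preimage_interior] at hx
    exact ⟨φ x, hx⟩
  tfae_have 5 → 6 := by
    rintro ⟨f, hf⟩ h0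
    obtain ⟨ε, hε, hball⟩ := Metric.mem_nhds_iff.mp (mem_interior_iff_mem_nhds.mp hf)
    have hB : ∀ x ∈ normBase K, ε / 2 ≤ f x := by
      rintro x ⟨hx, hx1⟩
      have hx0 : x ≠ 0 := by intro h; rw [h] at hx1; simp at hx1
      haveI : Nontrivial E := nontrivial_of_ne x 0 hx0
      obtain ⟨g, hg1, hgx⟩ := exists_dual_vector ℝ x (norm_ne_zero_iff.mpr hx0)
      have hmem : f - (ε / 2) • g ∈ dualCone K := by
        apply hball
        rw [Metric.mem_ball, dist_eq_norm]
        have : ‖f - (ε / 2) • g - f‖ = ε / 2 := by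
          rw [sub_sub_cancel_left, norm_neg, norm_smul (ε / 2) g, hg1, Real.norm_eq_abs,
            abs_of_nonneg (le_of_lt (half_pos hε)), mul_one]
        rw [this]; linarith
      have := hmem x hx
      simp only [ContinuousLinearMap.sub_apply, ContinuousLinearMap.smul_apply, hgx, hx1,
        smul_eq_mul, mul_one] at this
      norm_num at this
      linarith
    have := aux_halfspace hB _ h0
    simp only [map_zero] at this
    linarith
  tfae_finish
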